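/- For irrational α and any real θ, the sequence x_m = χ_{[1-α,1)}({mα + θ}) (indicator of whether the fractional part of mα + θ lies in [1-α, 1)), where 0 < α < 1, is not eventually periodic. -/

import Mathlib

theorem sturmian_coding_not_eventually_periodic
    (α θ : ℝ) (hα : Irrational α) (h0 : 0 < α) (h1 : α < 1)
    (x : ℤ → Bool)
    (hx : ∀ m : ℤ, x m = decide (Int.fract (m * α + θ) ∈ Set.Ico (1 - α) 1)) :
    ¬ ∃ T : ℤ, 1 ≤ T ∧ ∃ N : ℤ, ∀ m : ℤ, N ≤ m → x (m + T) = x m := by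
  rintro ⟨T, hT, N, hper⟩
  set F : ℤ → ℝ := fun m => Int.fract (m * α + θ) with hF
  have hFnonneg : ∀ m : ℤ, 0 ≤ F m := fun m => Int.fract_nonneg _
  have hFlt : ∀ m : ℤ, F m < 1 := fun m => Int.fract_lt_one _
  -- F(m+1) = fract (F m + α)
  have hshift : ∀ m : ℤ, F (m + 1) = Int.fract (F m + α) := by
    intro m
    have key : ((m + 1 : ℤ) : ℝ) * α + θ = (⌊m * α + θ⌋ : ℤ) + (Int.fract (m * α + θ) + α) := by
      rw [← add_assoc, Int.floor_add_fract]; push_cast; ring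
    simp only [hF]
    rw [key, Int.fract_intCast_add]
  -- step lemma
  have hstep : ∀ m : ℤ, F (m + 1) = F m + α - (if x m then 1 else 0) := by
    intro m
    rw [hshift m]
    by_cases hc : 1 - α ≤ F m
    · have hxm : x m = true := by
        rw [hx m]; simp only [Set.mem_Ico, decide_eq_true_eq]
        exact ⟨hc, hFlt m⟩
      rw [hxm, if_pos rfl]
      have h2 : F m + α - 1 = F m + α - (1 : ℤ) := by norm_num
      rw [show F m + α = (F m + α - 1) + (1:ℤ) by push_cast; ring, Int.fract_add_intCast,
        Int.fract_eq_self.mpr ⟨by linarith, by linarith [hFlt m]⟩]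
      push_cast; ring
    · have hxm : x m = false := by
        rw [hx m]; simp only [Set.mem_Ico, decide_eq_false_iff_not, not_and]
        intro h; exact absurd h hc
      rw [hxm, if_neg (by simp)]
      push_neg at hc
      rw [Int.fract_eq_self.mpr ⟨by linarith [hFnonneg m], by linarith⟩]
      ring
  -- D m := F (m+T) - F m is constant for m ≥ N
  set D : ℤ → ℝ := fun m => F (m + T) - F m with hD
  have hDstep : ∀ k : ℤ, N ≤ k → D (k + 1) = D k := by
    intro k hk
    simp only [hD]
    have e1 : k + 1 + T = (k + T) + 1 := by ring
    rw [e1, hstep (k + T), hstep k, hper k hk]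
    ring
  have hDconst' : ∀ n : ℕ, D (N + n) = D N := by
    intro n
    induction n with
    | zero => simp
    | succ n ih =>
      have e : (N + ((n : ℤ) + 1)) = (N + n) + 1 := by ring
      push_cast
      rw [e, hDstep (N + n) (by omega), ih]
  have hDconst : ∀ m : ℤ, N ≤ m → D m = D N := by
    intro m hm
    obtain ⟨n, rfl⟩ : ∃ n : ℕ, m = N + n := ⟨(m - N).toNat, by omega⟩
    exact hDconst' n
  -- iterate: F (N + k*T) = F N + k * D N
  have hiter : ∀ k : ℕ, F (N + k * T) = F N + k * D N := by
    intro k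
    induction k with
    | zero => simp
    | succ k ih =>
      have hge : N ≤ N + k * T := by
        have := mul_nonneg (Int.natCast_nonneg k) (le_trans zero_le_one hT); omega
      have : F (N + (k + 1 : ℕ) * T) = F (N + k * T) + D (N + k * T) := by
        simp only [hD]
        have : N + ((k : ℤ) + 1) * T = (N + k * T) + T := by ring
        push_cast
        rw [this]
        ring
      rw [this, hDconst _ hge, ih]
      push_cast
      ring
  -- D N ≠ 0
  have hDirr : Irrational (D N) := by
    have : D N = T * α - ((⌊(N + T) * α + θ⌋ - ⌊N * α + θ⌋ : ℤ) : ℝ) := by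
      simp only [hD, hF, Int.fract]
      push_cast
      ring
    rw [this]
    exact (hα.intCast_mul (by omega : T ≠ 0)).sub_intCast _
  have hDne : D N ≠ 0 := hDirr.ne_zero
  -- final contradiction
  have hbound : ∀ k : ℕ, (k : ℝ) * |D N| < 1 := by
    intro k
    have h := hiter k
    have h1' : F (N + k * T) < 1 := hFlt _
    have h2' : 0 ≤ F (N + k * T) := hFnonneg _
    have h3 : 0 ≤ F N := hFnonneg N
    have h4 : F N < 1 := hFlt N
    have habs : |(k : ℝ) * D N| < 1 := by
      rw [abs_lt]; constructor <;> nlinarith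
    rw [abs_mul, abs_of_nonneg (by positivity : (0:ℝ) ≤ (k:ℝ))] at habs
    exact habs
  obtain ⟨k, hk⟩ := exists_nat_gt (1 / |D N|)
  have hpos : 0 < |D N| := abs_pos.mpr hDne
  have : 1 < (k : ℝ) * |D N| := by
    rw [div_lt_iff₀ hpos] at hk
    linarith
  linarith [hbound k]
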